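/- Let A be a torsion-free abelian group and N ≤ A a subgroup with a left ordering whose positive cone is P_N such that the ordering is dense (no least positive element). Define the isolator I(N) = {g ∈ A : gˡ ∈ N for some positive integer l} and Q = {g ∈ I(N) : gˡ ∈ P_N for some positive integer l}. Then Q is the positive cone of a dense left ordering of I(N). -/

import Mathlib

/-- let `A` be a torsion-free abelian group, `N ≤ A` a subgroup, and `P_N` the
positive cone of a dense (no least positive element) ordering of `N`.  Then
`Q = {g : ∃ l > 0, gˡ ∈ P_N}` is the positive cone of a dense ordering of the isolator
`I(N) = {g : ∃ l > 0, gˡ ∈ N}`. -/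
theorem statement8 {A : Type*} [CommGroup A]
    (htf : ∀ g : A, g ≠ 1 → ∀ n : ℕ, 0 < n → g ^ n ≠ 1)
    (N : Subgroup A) (PN : Set A) (hPN : PN ⊆ (N : Set A))
    (hmul : ∀ a ∈ PN, ∀ b ∈ PN, a * b ∈ PN)
    (htri : ∀ g : A, g ∈ N → g ∈ PN ∨ g⁻¹ ∈ PN ∨ g = 1)
    (hasym : ∀ g : A, g ∈ PN → g⁻¹ ∉ PN)
    (hdense : ∀ ε ∈ PN, ∃ g ∈ PN, g⁻¹ * ε ∈ PN) :
    let I : Set A := {g : A | ∃ l : ℕ, 0 < l ∧ g ^ l ∈ N}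
    let Q : Set A := {g : A | ∃ l : ℕ, 0 < l ∧ g ^ l ∈ PN}
    Q ⊆ I ∧
      (∀ a ∈ Q, ∀ b ∈ Q, a * b ∈ Q) ∧
      (∀ g : A, g ∈ I → g ∈ Q ∨ g⁻¹ ∈ Q ∨ g = 1) ∧
      (∀ g : A, g ∈ Q → g⁻¹ ∉ Q) ∧
      (1 : A) ∉ Q ∧
      (∀ ε ∈ Q, ∃ g ∈ Q, g⁻¹ * ε ∈ Q) := by
  intro I Q
  -- positive powers of positive elements are positive
  have hpow : ∀ a ∈ PN, ∀ n : ℕ, 0 < n → a ^ n ∈ PN := by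
    intro a ha n hn
    induction n with
    | zero => omega
    | succ k ih =>
      rcases Nat.eq_zero_or_pos k with hk | hk
      · simpa [hk] using ha
      · rw [pow_succ]; exact hmul _ (ih hk) _ ha
  have h1 : (1 : A) ∉ PN := fun h => hasym 1 h (by simpa using h)
  -- halving lemma
  have hhalf : ∀ p ∈ PN, ∃ g ∈ PN, (g ^ 2)⁻¹ * p ∈ PN := by
    intro p hp
    obtain ⟨d, hd, hdp⟩ := hdense p hp
    have hdN : d ∈ N := hPN hd
    have hdpN : d⁻¹ * p ∈ N := hPN hdp
    have hcN : d⁻¹ * (d⁻¹ * p) ∈ N := N.mul_mem (N.inv_mem hdN) hdpN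
    rcases htri _ hcN with hc | hc | hc
    · -- d < d⁻¹ p : shrink d
      obtain ⟨e, he, hed⟩ := hdense d hd
      refine ⟨e, he, ?_⟩
      have : (e ^ 2)⁻¹ * p = (e⁻¹ * d) * ((e⁻¹ * d) * (d⁻¹ * (d⁻¹ * p))) := by
        simp [pow_two, mul_inv, mul_assoc, mul_comm, mul_left_comm]
      rw [this]
      exact hmul _ hed _ (hmul _ hed _ hc)
    · -- d⁻¹ p < d : shrink d⁻¹ p
      obtain ⟨e, he, hed⟩ := hdense _ hdp
      refine ⟨e, he, ?_⟩
      have : (e ^ 2)⁻¹ * p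
          = (e⁻¹ * (d⁻¹ * p)) * ((e⁻¹ * (d⁻¹ * p)) * (d⁻¹ * (d⁻¹ * p))⁻¹) := by
        simp [pow_two, mul_inv, mul_assoc, mul_comm, mul_left_comm]
      rw [this]
      exact hmul _ hed _ (hmul _ hed _ hc)
    · -- p = d ^ 2
      obtain ⟨e, he, hed⟩ := hdense d hd
      refine ⟨e, he, ?_⟩
      have hpd : p = d ^ 2 := by
        have h2 : d⁻¹ * (d⁻¹ * p) = 1 := hc
        have hdd : d⁻¹ * (d⁻¹ * (d * d)) = 1 := by group
        have : p = d * d := mul_left_cancel (mul_left_cancel (h2.trans hdd.symm))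
        rw [this, sq]
      have : (e ^ 2)⁻¹ * p = (e⁻¹ * d) * (e⁻¹ * d) := by
        rw [hpd]; simp [pow_two, mul_inv, mul_assoc, mul_comm, mul_left_comm]
      rw [this]
      exact hmul _ hed _ hed
  -- 2^k-th root smallness
  have hpow2 : ∀ k : ℕ, ∀ p ∈ PN, ∃ g ∈ PN, (g ^ 2 ^ k)⁻¹ * p ∈ PN := by
    intro k
    induction k with
    | zero =>
      intro p hp
      obtain ⟨g, hg, hgp⟩ := hdense p hp
      exact ⟨g, hg, by simpa using hgp⟩
    | succ k ih =>
      intro p hp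
      obtain ⟨g, hg, hgp⟩ := ih p hp
      obtain ⟨h, hh, hh2⟩ := hhalf g hg
      refine ⟨h, hh, ?_⟩
      have e1 : ((h ^ 2)⁻¹ * g) ^ 2 ^ k ∈ PN := hpow _ hh2 _ (Nat.pow_pos (n := k) (by norm_num))
      have e2 := hmul _ e1 _ hgp
      have key : (h ^ 2 ^ (k + 1))⁻¹ * p
          = ((h ^ 2)⁻¹ * g) ^ 2 ^ k * ((g ^ 2 ^ k)⁻¹ * p) := by
        rw [mul_pow, inv_pow, ← pow_mul, ← pow_succ']
        group
      rw [key]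
      exact e2
  -- l-th root smallness
  have hroot : ∀ l : ℕ, 0 < l → ∀ p ∈ PN, ∃ g ∈ PN, (g ^ l)⁻¹ * p ∈ PN := by
    intro l hl p hp
    obtain ⟨g, hg, hgp⟩ := hpow2 l p hp
    have hlt : l < 2 ^ l := Nat.lt_two_pow_self (n := l)
    refine ⟨g, hg, ?_⟩
    have hsplit : g ^ 2 ^ l = g ^ l * g ^ (2 ^ l - l) := by
      rw [← pow_add]; congr 1; omega
    have hmem : g ^ (2 ^ l - l) ∈ PN := hpow _ hg _ (by omega)
    have : (g ^ l)⁻¹ * p = g ^ (2 ^ l - l) * ((g ^ 2 ^ l)⁻¹ * p) := by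
      rw [hsplit]; group
    rw [this]
    exact hmul _ hmem _ hgp
  refine ⟨?_, ?_, ?_, ?_, ?_, ?_⟩
  · rintro g ⟨l, hl, hgl⟩
    exact ⟨l, hl, hPN hgl⟩
  · rintro a ⟨l, hl, hal⟩ b ⟨m, hm, hbm⟩
    refine ⟨l * m, Nat.mul_pos hl hm, ?_⟩
    have : (a * b) ^ (l * m) = (a ^ l) ^ m * (b ^ m) ^ l := by
      rw [mul_pow, ← pow_mul, ← pow_mul, mul_comm l m]
    rw [this]
    exact hmul _ (hpow _ hal _ hm) _ (hpow _ hbm _ hl)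
  · rintro g ⟨l, hl, hgl⟩
    rcases htri _ hgl with h | h | h
    · exact Or.inl ⟨l, hl, h⟩
    · exact Or.inr (Or.inl ⟨l, hl, by simpa [inv_pow] using h⟩)
    · right; right
      by_contra hg
      exact htf g hg l hl h
  · rintro g ⟨l, hl, hgl⟩ ⟨m, hm, hgm⟩
    have h1' : g ^ (l * m) ∈ PN := by
      rw [pow_mul]; exact hpow _ hgl _ hm
    have h2' : (g ^ (l * m))⁻¹ ∈ PN := by
      rw [← inv_pow, mul_comm, pow_mul]
      exact hpow _ hgm _ hl
    exact hasym _ h1' h2'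
  · rintro ⟨l, hl, h⟩
    exact h1 (by simpa using h)
  · rintro ε ⟨l, hl, hεl⟩
    obtain ⟨g, hg, hgε⟩ := hroot l hl _ hεl
    refine ⟨g, ⟨1, one_pos, by simpa using hg⟩, l, hl, ?_⟩
    rw [mul_pow, inv_pow]
    exact hgε
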